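/- arXiv:2403.12732 — 5 statements merged into one kernel-verified Lean document; each statement's English description precedes it below -/
import Mathlib

section
/- Let Φ : H → ℝ^t be a bounded linear operator, V = Φ*Φ, K = ΦΦ*, α > 0, and k ∈ H. Then ⟨k, (V + αI)^{-1} k⟩ = (1/α)(⟨k, k⟩ - (Φk)ᵀ(K + αI)^{-1}(Φk)). -/
open ContinuousLinearMap
open scoped RealInnerProductSpace

/-- `⟨k, (V + αI)⁻¹k⟩ = (1/α)(⟨k,k⟩ - (Φk)ᵀ(K + αI)⁻¹(Φk))`, where `V = Φ*Φ`, `K = ΦΦ*`. -/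
theorem posterior_variance_identity {H : Type*} [NormedAddCommGroup H] [InnerProductSpace ℝ H]
    [CompleteSpace H] {t : ℕ} (Φ : H →L[ℝ] EuclideanSpace ℝ (Fin t))
    (k : H) (α : ℝ) (hα : 0 < α)
    (Vinv : H →L[ℝ] H)
    (hV₁ : ((adjoint Φ) ∘L Φ + α • ContinuousLinearMap.id ℝ H) ∘L Vinv
        = ContinuousLinearMap.id ℝ H)
    (hV₂ : Vinv ∘L ((adjoint Φ) ∘L Φ + α • ContinuousLinearMap.id ℝ H)
        = ContinuousLinearMap.id ℝ H)
    (Kinv : EuclideanSpace ℝ (Fin t) →L[ℝ] EuclideanSpace ℝ (Fin t))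
    (hK₁ : (Φ ∘L (adjoint Φ) + α • ContinuousLinearMap.id ℝ (EuclideanSpace ℝ (Fin t))) ∘L Kinv
        = ContinuousLinearMap.id ℝ (EuclideanSpace ℝ (Fin t)))
    (hK₂ : Kinv ∘L (Φ ∘L (adjoint Φ) + α • ContinuousLinearMap.id ℝ (EuclideanSpace ℝ (Fin t)))
        = ContinuousLinearMap.id ℝ (EuclideanSpace ℝ (Fin t))) :
    ⟪k, Vinv k⟫ = α⁻¹ * (⟪k, k⟫ - ⟪Φ k, Kinv (Φ k)⟫) := by
  set A := (adjoint Φ) ∘L Φ + α • ContinuousLinearMap.id ℝ H with hA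
  set B := Φ ∘L (adjoint Φ) + α • ContinuousLinearMap.id ℝ (EuclideanSpace ℝ (Fin t)) with hB
  set W := α⁻¹ • (ContinuousLinearMap.id ℝ H - (adjoint Φ) ∘L (Kinv ∘L Φ)) with hWdef
  have hswap : A ∘L adjoint Φ = adjoint Φ ∘L B := by
    simp only [hA, hB, add_comp, comp_add, smul_comp, comp_smulₛₗ, RingHom.id_apply,
      comp_assoc, id_comp, comp_id]
  have hkey : A ∘L ((adjoint Φ) ∘L (Kinv ∘L Φ)) = (adjoint Φ) ∘L Φ := by
    calc A ∘L ((adjoint Φ) ∘L (Kinv ∘L Φ))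
        = (A ∘L adjoint Φ) ∘L (Kinv ∘L Φ) := by rw [comp_assoc]
      _ = (adjoint Φ ∘L B) ∘L (Kinv ∘L Φ) := by rw [hswap]
      _ = adjoint Φ ∘L ((B ∘L Kinv) ∘L Φ) := by simp only [comp_assoc]
      _ = (adjoint Φ) ∘L Φ := by rw [hK₁, id_comp]
  have hAW : A ∘L W = ContinuousLinearMap.id ℝ H := by
    rw [hWdef, comp_smulₛₗ, comp_sub, hkey, comp_id, hA, add_sub_cancel_left]
    rw [smul_smul]
    simp [RingHom.id_apply, inv_mul_cancel₀ hα.ne']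
  have hW : Vinv = W := by
    calc Vinv = Vinv ∘L (A ∘L W) := by rw [hAW, comp_id]
      _ = (Vinv ∘L A) ∘L W := by rw [comp_assoc]
      _ = W := by rw [hV₂, id_comp]
  rw [hW, hWdef]
  simp only [smul_apply, sub_apply, ContinuousLinearMap.id_apply, comp_apply,
    inner_smul_right, inner_sub_right, adjoint_inner_right]
end

section
/- Let H be a real Hilbert space, Φ : H → ℝ^t a bounded linear operator, V = Φ*Φ, α > 0, and let μ ∈ H, R ≥ 0, and x-evaluation be given by a fixed vector k ∈ H. Then for every f ∈ H with ‖(V + αI)^{1/2}(f - μ)‖ ≤ R, one has |⟨k, f⟩ - ⟨k, μ⟩| ≤ (R/√α)·√(⟨k,k⟩ - (Φk)ᵀ(ΦΦ* + αI)^{-1}(Φk)). -/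
open ContinuousLinearMap
open scoped RealInnerProductSpace

/-- Analytic upper confidence bound via Cauchy–Schwarz: if
`‖(V + αI)^{1/2}(f - μ)‖ ≤ R` then
`|⟨k,f⟩ - ⟨k,μ⟩| ≤ (R/√α)·√(⟨k,k⟩ - (Φk)ᵀ(ΦΦ* + αI)⁻¹(Φk))`. -/
theorem analytic_ucb {H : Type*} [NormedAddCommGroup H] [InnerProductSpace ℝ H]
    [CompleteSpace H] {t : ℕ} (Φ : H →L[ℝ] EuclideanSpace ℝ (Fin t))
    (k μ : H) (α R : ℝ) (hα : 0 < α) (hR : 0 ≤ R)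
    (S : H →L[ℝ] H) (hSsa : ∀ f g : H, ⟪S f, g⟫ = ⟪f, S g⟫)
    (hSpos : ∀ f : H, 0 ≤ ⟪f, S f⟫)
    (hSsq : S ∘L S = (adjoint Φ) ∘L Φ + α • ContinuousLinearMap.id ℝ H)
    (Kinv : EuclideanSpace ℝ (Fin t) →L[ℝ] EuclideanSpace ℝ (Fin t))
    (hK₁ : (Φ ∘L (adjoint Φ) + α • ContinuousLinearMap.id ℝ (EuclideanSpace ℝ (Fin t))) ∘L Kinv
        = ContinuousLinearMap.id ℝ (EuclideanSpace ℝ (Fin t)))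
    (hK₂ : Kinv ∘L (Φ ∘L (adjoint Φ) + α • ContinuousLinearMap.id ℝ (EuclideanSpace ℝ (Fin t)))
        = ContinuousLinearMap.id ℝ (EuclideanSpace ℝ (Fin t))) :
    ∀ f : H, ‖S (f - μ)‖ ≤ R →
      |⟪k, f⟫ - ⟪k, μ⟫|
        ≤ (R / Real.sqrt α) * Real.sqrt (⟪k, k⟫ - ⟪Φ k, Kinv (Φ k)⟫) := by
  intro f hf
  have hαne : α ≠ 0 := hα.ne'
  set v : EuclideanSpace ℝ (Fin t) := Kinv (Φ k) with hv
  set w : H := α⁻¹ • (k - adjoint Φ v) with hw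
  -- push-through: (Φ Φ* + α) v = Φ k
  have hv1 : Φ (adjoint Φ v) + α • v = Φ k := by
    have := congrFun (congrArg DFunLike.coe hK₁) (Φ k)
    simpa [hv] using this
  have hSS : ∀ x : H, S (S x) = adjoint Φ (Φ x) + α • x := by
    intro x
    have := congrFun (congrArg DFunLike.coe hSsq) x
    simpa using this
  -- key: S (S w) = k
  have hTw : S (S w) = k := by
    have h2 : adjoint Φ (Φ (adjoint Φ v)) = adjoint Φ (Φ k) - α • adjoint Φ v := by
      have := congrArg (adjoint Φ) hv1
      rw [map_add, map_smul] at this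
      exact eq_sub_of_add_eq this
    rw [hSS, hw, map_smul, map_smul, map_sub, map_sub, h2]
    match_scalars <;> field_simp <;> ring
  -- self-adjointness of M := Φ Φ* + α id, hence of Kinv
  have hMsa : ∀ a b : EuclideanSpace ℝ (Fin t),
      ⟪Φ (adjoint Φ a) + α • a, b⟫ = ⟪a, Φ (adjoint Φ b) + α • b⟫ := by
    intro a b
    rw [inner_add_left, inner_add_right, real_inner_smul_left, real_inner_smul_right,
      ← adjoint_inner_right (𝕜 := ℝ) Φ, adjoint_inner_left]
  have hKsa : ⟪v, Φ k⟫ = ⟪Φ k, v⟫ := real_inner_comm _ _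
  have hKsym : ∀ a b : EuclideanSpace ℝ (Fin t), ⟪Kinv a, b⟫ = ⟪a, Kinv b⟫ := by
    intro a b
    have hM : ∀ c : EuclideanSpace ℝ (Fin t), Φ (adjoint Φ (Kinv c)) + α • Kinv c = c := by
      intro c
      have := congrFun (congrArg DFunLike.coe hK₁) c
      simpa using this
    calc ⟪Kinv a, b⟫ = ⟪Kinv a, Φ (adjoint Φ (Kinv b)) + α • Kinv b⟫ := by rw [hM]
      _ = ⟪Φ (adjoint Φ (Kinv a)) + α • Kinv a, Kinv b⟫ := (hMsa _ _).symm
      _ = ⟪a, Kinv b⟫ := by rw [hM]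
  -- inner product identities
  have hwk : ⟪w, k⟫ = α⁻¹ * (⟪k, k⟫ - ⟪Φ k, Kinv (Φ k)⟫) := by
    rw [hw, real_inner_smul_left, inner_sub_left, adjoint_inner_left, hv, hKsym]
  have hnorm : ‖S w‖ ^ 2 = ⟪w, k⟫ := by
    rw [← real_inner_self_eq_norm_sq, hSsa, hTw]
  have hwk_nonneg : 0 ≤ ⟪w, k⟫ := hnorm ▸ sq_nonneg _
  set c : ℝ := ⟪k, k⟫ - ⟪Φ k, Kinv (Φ k)⟫ with hc
  have hc_nonneg : 0 ≤ c := by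
    by_contra h
    push_neg at h
    nlinarith [hwk_nonneg, hwk, inv_pos.mpr hα]
  have hSw : ‖S w‖ = Real.sqrt c / Real.sqrt α := by
    have : ‖S w‖ = Real.sqrt (α⁻¹ * c) := by
      rw [← Real.sqrt_sq (norm_nonneg (S w)), hnorm, hwk]
    rw [this, Real.sqrt_mul (by positivity), Real.sqrt_inv, div_eq_inv_mul]
  -- main chain
  have key : ⟪k, f⟫ - ⟪k, μ⟫ = ⟪S w, S (f - μ)⟫ := by
    rw [← hSsa, hTw, inner_sub_right]
  rw [key]
  calc |⟪S w, S (f - μ)⟫| ≤ ‖S w‖ * ‖S (f - μ)‖ := abs_real_inner_le_norm _ _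
    _ ≤ ‖S w‖ * R := by
        apply mul_le_mul_of_nonneg_left hf (norm_nonneg _)
    _ = (R / Real.sqrt α) * Real.sqrt c := by
        rw [hSw]; ring
end

section
/- Let H be the RKHS of a kernel k, let R, B ≥ 0, y ∈ ℝ^t, and points x₁,…,x_t, x ∈ X. Then the supremum of f(x) over f ∈ H satisfying ‖(f(x₁),…,f(x_t)) - y‖ ≤ R and ‖f‖_H ≤ B equals the supremum of k_{t+1}(x)ᵀw over w ∈ ℝ^{t+1} satisfying ‖K_{t,t+1}w - y‖ ≤ R and wᵀK_{t+1}w ≤ B², where k_{t+1}(x) = (k(x,x₁),…,k(x,x_t),k(x,x))ᵀ, K_{t+1} is the kernel matrix of (x₁,…,x_t,x), and K_{t,t+1} consists of its first t rows. -/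
open Matrix
open scoped RealInnerProductSpace

private lemma inner_sum_smul {H : Type*} [NormedAddCommGroup H] [InnerProductSpace ℝ H]
    {n : ℕ} (v : Fin n → H) (w : Fin n → ℝ) (g : H) :
    ⟪∑ j, w j • v j, g⟫ = ∑ j, w j * ⟪v j, g⟫ := by
  rw [sum_inner]; simp [real_inner_smul_left]

/-- Representer-theorem reformulation of the UCB program. The RKHS is modelled by a real
Hilbert space `H` with feature map `K : X → H` (`K z = k(·,z)`), so that `f(z) = ⟪f, K z⟫`.
The supremum of `f(x)` over `f ∈ H` with `‖(f(x₁),…,f(x_t)) - y‖ ≤ R` and `‖f‖ ≤ B`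
equals the supremum of `k_{t+1}(x)ᵀw` over `w ∈ ℝ^{t+1}` with `‖K_{t,t+1}w - y‖ ≤ R`
and `wᵀK_{t+1}w ≤ B²`. -/
theorem representer_ucb {X : Type*} {H : Type*} [NormedAddCommGroup H]
    [InnerProductSpace ℝ H] [CompleteSpace H] (K : X → H) {t : ℕ}
    (xs : Fin t → X) (x : X) (y : Fin t → ℝ) (R B : ℝ) (hR : 0 ≤ R) (hB : 0 ≤ B)
    (p : Fin (t + 1) → X) (hp : p = Fin.snoc xs x)
    (kv : Fin (t + 1) → ℝ) (hkv : ∀ j, kv j = ⟪K (p j), K x⟫)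
    (Kmat : Matrix (Fin (t + 1)) (Fin (t + 1)) ℝ)
    (hKmat : ∀ i j, Kmat i j = ⟪K (p i), K (p j)⟫)
    (Ktt1 : Matrix (Fin t) (Fin (t + 1)) ℝ)
    (hKtt1 : ∀ i j, Ktt1 i j = ⟪K (xs i), K (p j)⟫) :
    sSup {v : ℝ | ∃ f : H,
        (Real.sqrt (∑ i, (⟪f, K (xs i)⟫ - y i) ^ 2) ≤ R ∧ ‖f‖ ≤ B) ∧ v = ⟪f, K x⟫}
      = sSup {v : ℝ | ∃ w : Fin (t + 1) → ℝ,
        (Real.sqrt (∑ i, ((Ktt1 *ᵥ w) i - y i) ^ 2) ≤ R ∧ w ⬝ᵥ (Kmat *ᵥ w) ≤ B ^ 2) ∧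
          v = kv ⬝ᵥ w} := by
  have hxlast : p (Fin.last t) = x := by rw [hp]; simp
  have hxs : ∀ i : Fin t, p i.castSucc = xs i := by intro i; rw [hp]; simp
  -- key computations for f of the form ∑ w j • K (p j)
  have key1 : ∀ (w : Fin (t + 1) → ℝ) (i : Fin t),
      (Ktt1 *ᵥ w) i = ⟪∑ j, w j • K (p j), K (xs i)⟫ := by
    intro w i
    rw [inner_sum_smul]
    simp only [Matrix.mulVec, dotProduct, hKtt1]
    refine Finset.sum_congr rfl fun j _ => ?_
    rw [real_inner_comm]; ring
  have key2 : ∀ (w : Fin (t + 1) → ℝ),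
      w ⬝ᵥ (Kmat *ᵥ w) = ⟪∑ j, w j • K (p j), ∑ j, w j • K (p j)⟫ := by
    intro w
    rw [inner_sum_smul]
    simp only [dotProduct, Matrix.mulVec, hKmat]
    refine Finset.sum_congr rfl fun i _ => ?_
    rw [inner_sum, Finset.mul_sum, Finset.mul_sum]
    refine Finset.sum_congr rfl fun j _ => ?_
    rw [real_inner_smul_right]; ring
  have key3 : ∀ (w : Fin (t + 1) → ℝ),
      kv ⬝ᵥ w = ⟪∑ j, w j • K (p j), K x⟫ := by
    intro w
    rw [inner_sum_smul]
    simp only [dotProduct, hkv]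
    exact Finset.sum_congr rfl fun j _ => mul_comm _ _
  congr 1
  ext v
  simp only [Set.mem_setOf_eq]
  constructor
  · rintro ⟨f, ⟨h1, h2⟩, rfl⟩
    set S : Submodule ℝ H := Submodule.span ℝ (Set.range fun j => K (p j)) with hS
    haveI : FiniteDimensional ℝ S := FiniteDimensional.span_of_finite ℝ (Set.finite_range _)
    haveI : CompleteSpace S := FiniteDimensional.complete ℝ S
    set f₀ : H := (S.orthogonalProjectionOnto f : H) with hf₀
    have hf₀S : f₀ ∈ S := (S.orthogonalProjectionOnto f).2
    obtain ⟨w, hw⟩ := (Submodule.mem_span_range_iff_exists_fun ℝ).mp hf₀S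
    have hinner : ∀ g ∈ S, ⟪f, g⟫ = ⟪f₀, g⟫ := by
      intro g hg
      have h0 : ⟪f - f₀, g⟫ = 0 := S.starProjection_inner_eq_zero f g hg
      rw [inner_sub_left] at h0
      linarith
    have hmem : ∀ j, K (p j) ∈ S := fun j => Submodule.subset_span ⟨j, rfl⟩
    have hnorm : ‖f₀‖ ≤ ‖f‖ := by
      calc ‖f₀‖ ≤ ‖S.orthogonalProjectionOnto f‖ := by rw [hf₀]; simp
        _ ≤ ‖(S.orthogonalProjectionOnto : H →L[ℝ] S)‖ * ‖f‖ :=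
            (S.orthogonalProjectionOnto).le_opNorm f
        _ ≤ 1 * ‖f‖ := by
            exact mul_le_mul_of_nonneg_right (S.orthogonalProjectionOnto_norm_le) (norm_nonneg f)
        _ = ‖f‖ := one_mul _
    refine ⟨w, ⟨?_, ?_⟩, ?_⟩
    · have he : ∀ i, ⟪f, K (xs i)⟫ = (Ktt1 *ᵥ w) i := by
        intro i
        rw [key1, hw]
        exact hinner _ (hxs i ▸ hmem i.castSucc)
      simp only [← he]
      exact h1
    · rw [key2, hw, real_inner_self_eq_norm_sq]
      calc ‖f₀‖ ^ 2 ≤ ‖f‖ ^ 2 := by nlinarith [norm_nonneg f₀]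
        _ ≤ B ^ 2 := by nlinarith [norm_nonneg f]
    · rw [key3, hw]
      exact hinner _ (hxlast ▸ hmem (Fin.last t))
  · rintro ⟨w, ⟨h1, h2⟩, rfl⟩
    refine ⟨∑ j, w j • K (p j), ⟨?_, ?_⟩, key3 w⟩
    · simp only [← key1 w]
      exact h1
    · have h3 : ‖∑ j, w j • K (p j)‖ ^ 2 ≤ B ^ 2 := by
        rw [← real_inner_self_eq_norm_sq, ← key2]; exact h2
      exact le_of_pow_le_pow_left₀ two_ne_zero hB h3
end

section
/- Suppose that for each round t ≥ 1 (up to T) the per-round regret satisfies 0 ≤ r_t ≤ min(2C, 2U_t·ρ_t) where C > 0, U_t ≥ 0 is nondecreasing in t, and ρ_t ≥ 0 satisfies ∑_{t=1}^T min(1, ρ_t²) ≤ G for some G ≥ 0. Then ∑_{t=1}^T r_t ≤ 2·√(T·max(C², U_T²)·G). -/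
/-- Cumulative regret bound: if `0 ≤ r_t ≤ min(2C, 2U_t·ρ_t)` with `U` nondecreasing and
`∑_{t=1}^T min(1, ρ_t²) ≤ G`, then `∑_{t=1}^T r_t ≤ 2√(T·max(C², U_T²)·G)`. -/
theorem cumulative_regret_bound (T : ℕ) (r U ρ : ℕ → ℝ) (C G : ℝ) (hC : 0 < C)
    (hG : 0 ≤ G) (hU : Monotone U) (hUnn : ∀ t, 0 ≤ U t) (hρ : ∀ t, 0 ≤ ρ t)
    (hr : ∀ t ∈ Finset.Icc 1 T, 0 ≤ r t ∧ r t ≤ min (2 * C) (2 * U t * ρ t))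
    (hsum : ∑ t ∈ Finset.Icc 1 T, min 1 (ρ t ^ 2) ≤ G) :
    ∑ t ∈ Finset.Icc 1 T, r t
      ≤ 2 * Real.sqrt ((T : ℝ) * max (C ^ 2) (U T ^ 2) * G) := by
  set S := Finset.Icc 1 T with hS
  set M := max (C ^ 2) (U T ^ 2) with hM
  have hM0 : 0 ≤ M := le_trans (sq_nonneg C) (le_max_left _ _)
  -- pointwise square bound
  have key : ∀ t ∈ S, r t ^ 2 ≤ 4 * M * min 1 (ρ t ^ 2) := by
    intro t ht
    obtain ⟨hr0, hrle⟩ := hr t ht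
    have htT : t ≤ T := (Finset.mem_Icc.mp ht).2
    have hUt : U t ≤ U T := hU htT
    have hUt2 : U t ^ 2 ≤ M := le_trans (by
      exact pow_le_pow_left₀ (hUnn t) hUt 2) (le_max_right _ _)
    rcases le_total (ρ t ^ 2) 1 with h1 | h1
    · have hmin : min 1 (ρ t ^ 2) = ρ t ^ 2 := min_eq_right h1
      have : r t ≤ 2 * U t * ρ t := le_trans hrle (min_le_right _ _)
      have h2 : r t ^ 2 ≤ (2 * U t * ρ t) ^ 2 := pow_le_pow_left₀ hr0 this 2
      calc r t ^ 2 ≤ (2 * U t * ρ t) ^ 2 := h2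
        _ = 4 * U t ^ 2 * ρ t ^ 2 := by ring
        _ ≤ 4 * M * ρ t ^ 2 := by
            apply mul_le_mul_of_nonneg_right _ (sq_nonneg _)
            linarith
        _ = 4 * M * min 1 (ρ t ^ 2) := by rw [hmin]
    · have hmin : min 1 (ρ t ^ 2) = 1 := min_eq_left h1
      have : r t ≤ 2 * C := le_trans hrle (min_le_left _ _)
      have h2 : r t ^ 2 ≤ (2 * C) ^ 2 := pow_le_pow_left₀ hr0 this 2
      have hC2 : C ^ 2 ≤ M := le_max_left _ _
      calc r t ^ 2 ≤ (2 * C) ^ 2 := h2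
        _ = 4 * C ^ 2 := by ring
        _ ≤ 4 * M := by linarith
        _ = 4 * M * min 1 (ρ t ^ 2) := by rw [hmin]; ring
  -- sum of squares bound
  have hsq : ∑ t ∈ S, r t ^ 2 ≤ 4 * M * G := by
    calc ∑ t ∈ S, r t ^ 2 ≤ ∑ t ∈ S, 4 * M * min 1 (ρ t ^ 2) :=
          Finset.sum_le_sum key
      _ = 4 * M * ∑ t ∈ S, min 1 (ρ t ^ 2) := by rw [Finset.mul_sum]
      _ ≤ 4 * M * G := by
          apply mul_le_mul_of_nonneg_left hsum
          linarith
  -- Cauchy–Schwarz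
  have hcs : (∑ t ∈ S, r t) ^ 2 ≤ (S.card : ℝ) * ∑ t ∈ S, r t ^ 2 :=
    sq_sum_le_card_mul_sum_sq
  have hcard : (S.card : ℝ) ≤ (T : ℝ) := by
    have : S.card ≤ T := by
      rw [hS, Nat.card_Icc]; omega
    exact_mod_cast this
  have hsum0 : 0 ≤ ∑ t ∈ S, r t :=
    Finset.sum_nonneg fun t ht => (hr t ht).1
  have hsq0 : 0 ≤ ∑ t ∈ S, r t ^ 2 := Finset.sum_nonneg fun t _ => sq_nonneg _
  have hfinal : (∑ t ∈ S, r t) ^ 2 ≤ 4 * ((T : ℝ) * M * G) := by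
    calc (∑ t ∈ S, r t) ^ 2 ≤ (S.card : ℝ) * ∑ t ∈ S, r t ^ 2 := hcs
      _ ≤ (T : ℝ) * ∑ t ∈ S, r t ^ 2 := mul_le_mul_of_nonneg_right hcard hsq0
      _ ≤ (T : ℝ) * (4 * M * G) := by
          apply mul_le_mul_of_nonneg_left hsq (by positivity)
      _ = 4 * ((T : ℝ) * M * G) := by ring
  have h4 : Real.sqrt (4 * ((T : ℝ) * M * G)) = 2 * Real.sqrt ((T : ℝ) * M * G) := by
    rw [show (4 : ℝ) = 2 ^ 2 by norm_num, Real.sqrt_mul (by positivity),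
      Real.sqrt_sq (by norm_num : (0:ℝ) ≤ 2)]
  rw [← h4]
  exact (Real.le_sqrt hsum0 (by positivity)).mpr hfinal
end

section
/- Let H be a real Hilbert space, k, y-data as follows: let Φ : H → ℝ^t be bounded linear with V = Φ*Φ and K = ΦΦ*, let k ∈ H, y ∈ ℝ^t, R, B ≥ 0, and η₁, η₂ > 0 with α = η₂/η₁. Then sup over f ∈ H of [⟨k,f⟩ + η₁(R² - ‖Φf - y‖²) + η₂(B² - ‖f‖²)] equals ⟨k, μ_α⟩ + (1/(4η₁α))·(⟨k,k⟩ - (Φk)ᵀ(K + αI)^{-1}(Φk)) + η₁·R̃_α², where μ_α = (V + αI)^{-1}Φ*y and R̃_α² = R² + αB² - yᵀ((1/α)K + I)^{-1}y. -/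
open ContinuousLinearMap
open scoped RealInnerProductSpace

set_option maxHeartbeats 1000000 in
/-- Closed form of the Lagrangian dual function of the two-ellipsoid UCB program:
`sup_f [⟨k,f⟩ + η₁(R² - ‖Φf - y‖²) + η₂(B² - ‖f‖²)]
  = ⟨k, μ_α⟩ + (1/(4η₁α))(⟨k,k⟩ - (Φk)ᵀ(K + αI)⁻¹(Φk)) + η₁·R̃_α²`,
where `α = η₂/η₁`, `μ_α = (V + αI)⁻¹Φ*y`, and
`R̃_α² = R² + αB² - yᵀ((1/α)K + I)⁻¹y`. -/
theorem dual_function_closed_form {H : Type*} [NormedAddCommGroup H]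
    [InnerProductSpace ℝ H] [CompleteSpace H] {t : ℕ}
    (Φ : H →L[ℝ] EuclideanSpace ℝ (Fin t)) (k : H) (y : EuclideanSpace ℝ (Fin t))
    (R B η₁ η₂ α : ℝ) (hR : 0 ≤ R) (hB : 0 ≤ B) (hη₁ : 0 < η₁) (hη₂ : 0 < η₂)
    (hα : α = η₂ / η₁)
    (Vinv : H →L[ℝ] H)
    (hV₁ : ((adjoint Φ) ∘L Φ + α • ContinuousLinearMap.id ℝ H) ∘L Vinv
        = ContinuousLinearMap.id ℝ H)
    (hV₂ : Vinv ∘L ((adjoint Φ) ∘L Φ + α • ContinuousLinearMap.id ℝ H)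
        = ContinuousLinearMap.id ℝ H)
    (Kinv : EuclideanSpace ℝ (Fin t) →L[ℝ] EuclideanSpace ℝ (Fin t))
    (hK₁ : (Φ ∘L (adjoint Φ) + α • ContinuousLinearMap.id ℝ (EuclideanSpace ℝ (Fin t))) ∘L Kinv
        = ContinuousLinearMap.id ℝ (EuclideanSpace ℝ (Fin t)))
    (hK₂ : Kinv ∘L (Φ ∘L (adjoint Φ) + α • ContinuousLinearMap.id ℝ (EuclideanSpace ℝ (Fin t)))
        = ContinuousLinearMap.id ℝ (EuclideanSpace ℝ (Fin t)))
    (Minv : EuclideanSpace ℝ (Fin t) →L[ℝ] EuclideanSpace ℝ (Fin t))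
    (hM₁ : (α⁻¹ • (Φ ∘L (adjoint Φ)) + ContinuousLinearMap.id ℝ (EuclideanSpace ℝ (Fin t))) ∘L Minv
        = ContinuousLinearMap.id ℝ (EuclideanSpace ℝ (Fin t)))
    (hM₂ : Minv ∘L (α⁻¹ • (Φ ∘L (adjoint Φ)) + ContinuousLinearMap.id ℝ (EuclideanSpace ℝ (Fin t)))
        = ContinuousLinearMap.id ℝ (EuclideanSpace ℝ (Fin t))) :
    sSup (Set.range fun f : H =>
        ⟪k, f⟫ + η₁ * (R ^ 2 - ‖Φ f - y‖ ^ 2) + η₂ * (B ^ 2 - ‖f‖ ^ 2))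
      = ⟪k, Vinv ((adjoint Φ) y)⟫
        + (1 / (4 * η₁ * α)) * (⟪k, k⟫ - ⟪Φ k, Kinv (Φ k)⟫)
        + η₁ * (R ^ 2 + α * B ^ 2 - ⟪y, Minv y⟫) := by
  have hη₁' : η₁ ≠ 0 := ne_of_gt hη₁
  have hαpos : 0 < α := hα ▸ div_pos hη₂ hη₁
  have hα0 : α ≠ 0 := ne_of_gt hαpos
  have hη₂eq : η₂ = η₁ * α := by rw [hα]; field_simp
  set A : H →L[ℝ] H := (adjoint Φ) ∘L Φ + α • ContinuousLinearMap.id ℝ H with hA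
  have hAapp : ∀ u : H, A u = adjoint Φ (Φ u) + α • u := fun u => rfl
  have hAV : ∀ x : H, A (Vinv x) = x := fun x => by
    have := congrArg (fun T : H →L[ℝ] H => T x) hV₁; simpa [hA] using this
  have hVA : ∀ x : H, Vinv (A x) = x := fun x => by
    have := congrArg (fun T : H →L[ℝ] H => T x) hV₂; simpa [hA] using this
  have hKapp : ∀ x, Φ (adjoint Φ (Kinv x)) + α • Kinv x = x := fun x => by
    have := congrArg (fun T : EuclideanSpace ℝ (Fin t) →L[ℝ] EuclideanSpace ℝ (Fin t) => T x) hK₁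
    simpa using this
  have hMinvM : ∀ x, Minv (α⁻¹ • (Φ (adjoint Φ x)) + x) = x := fun x => by
    have := congrArg (fun T : EuclideanSpace ℝ (Fin t) →L[ℝ] EuclideanSpace ℝ (Fin t) => T x) hM₂
    simpa using this
  have hAadj : ∀ z, A (adjoint Φ (Kinv z)) = adjoint Φ z := fun z => by
    rw [hAapp, ← map_smul (adjoint Φ) α (Kinv z), ← map_add (adjoint Φ), hKapp]
  have h1 : ∀ x, Vinv (adjoint Φ x) = adjoint Φ (Kinv x) := fun x => by
    conv_lhs => rw [← hAadj x]
    exact hVA _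
  have h2 : α • Vinv k = k - adjoint Φ (Kinv (Φ k)) := by
    have e1 : A (α • Vinv k) = α • k := by rw [map_smul, hAV]
    have e2 : A (k - adjoint Φ (Kinv (Φ k))) = α • k := by
      rw [map_sub, hAadj, hAapp]; abel
    calc α • Vinv k = Vinv (A (α • Vinv k)) := (hVA _).symm
      _ = Vinv (A (k - adjoint Φ (Kinv (Φ k)))) := by rw [e1, e2]
      _ = _ := hVA _
  have h3 : Minv y = α • Kinv y := by
    have e : α⁻¹ • (Φ (adjoint Φ (α • Kinv y))) + α • Kinv y = y := by
      rw [map_smul, map_smul, smul_smul, inv_mul_cancel₀ hα0, one_smul, hKapp]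
    calc Minv y = Minv (α⁻¹ • (Φ (adjoint Φ (α • Kinv y))) + α • Kinv y) := by rw [e]
      _ = α • Kinv y := hMinvM _
  have hAsymm : ∀ u v : H, ⟪A u, v⟫ = ⟪u, A v⟫ := fun u v => by
    simp only [hAapp, inner_add_left, inner_add_right, real_inner_smul_left,
      real_inner_smul_right, adjoint_inner_left, adjoint_inner_right]
  have hVsymm : ∀ x z : H, ⟪Vinv x, z⟫ = ⟪x, Vinv z⟫ := fun x z => by
    calc ⟪Vinv x, z⟫ = ⟪Vinv x, A (Vinv z)⟫ := by rw [hAV]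
      _ = ⟪A (Vinv x), Vinv z⟫ := (hAsymm _ _).symm
      _ = ⟪x, Vinv z⟫ := by rw [hAV]
  set μ : H := Vinv (adjoint Φ y) with hμ
  set u : H := Vinv k with hu
  set fs : H := μ + (1 / (2 * η₁)) • u with hfs
  have hstar : A fs = adjoint Φ y + (1 / (2 * η₁)) • k := by
    rw [hfs, map_add, map_smul, hμ, hu, hAV, hAV]
  -- key identity
  have key : ∀ f : H, ⟪k, f⟫ + η₁ * (R ^ 2 - ‖Φ f - y‖ ^ 2) + η₂ * (B ^ 2 - ‖f‖ ^ 2)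
      = (⟪k, fs⟫ + η₁ * (R ^ 2 - ‖Φ fs - y‖ ^ 2) + η₂ * (B ^ 2 - ‖fs‖ ^ 2))
        - η₁ * ‖Φ (f - fs)‖ ^ 2 - η₂ * ‖f - fs‖ ^ 2 := by
    intro f
    set d : H := f - fs with hd
    have hf : f = fs + d := by rw [hd]; abel
    have hΦ : Φ f - y = (Φ fs - y) + Φ d := by rw [hf, map_add]; abel
    have hinner : 2 * η₁ * ⟪Φ fs - y, Φ d⟫ = ⟪k, d⟫ - 2 * η₁ * α * ⟪fs, d⟫ := by
      have e1 : ⟪Φ fs - y, Φ d⟫ = ⟪adjoint Φ (Φ fs) - adjoint Φ y, d⟫ := by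
        rw [inner_sub_left, inner_sub_left, adjoint_inner_left, adjoint_inner_left]
      have e2 : adjoint Φ (Φ fs) - adjoint Φ y = (1 / (2 * η₁)) • k - α • fs := by
        have e3 := hstar
        rw [hAapp] at e3
        rw [sub_eq_sub_iff_add_eq_add, e3]
        abel
      rw [e1, e2, inner_sub_left, real_inner_smul_left, real_inner_smul_left]
      field_simp
    rw [hΦ, hf, norm_add_sq_real, norm_add_sq_real, inner_add_right]
    linear_combination (-1 : ℝ) * hinner + (-2 * ⟪fs, d⟫) * hη₂eq
  have hub : IsGreatest (Set.range fun f : H =>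
      ⟪k, f⟫ + η₁ * (R ^ 2 - ‖Φ f - y‖ ^ 2) + η₂ * (B ^ 2 - ‖f‖ ^ 2))
      (⟪k, fs⟫ + η₁ * (R ^ 2 - ‖Φ fs - y‖ ^ 2) + η₂ * (B ^ 2 - ‖fs‖ ^ 2)) := by
    constructor
    · exact ⟨fs, rfl⟩
    · rintro x ⟨f, rfl⟩
      dsimp only
      rw [key f]
      have h5 : 0 ≤ η₁ * ‖Φ (f - fs)‖ ^ 2 := mul_nonneg hη₁.le (sq_nonneg _)
      have h6 : 0 ≤ η₂ * ‖f - fs‖ ^ 2 := mul_nonneg hη₂.le (sq_nonneg _)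
      linarith
  rw [hub.csSup_eq]
  -- now compute the value at fs
  have hb : α * ⟪k, u⟫ = ⟪k, k⟫ - ⟪Φ k, Kinv (Φ k)⟫ := by
    have e : ⟪k, α • Vinv k⟫ = ⟪k, k - adjoint Φ (Kinv (Φ k))⟫ := by rw [h2]
    rwa [real_inner_smul_right, inner_sub_right, adjoint_inner_right, ← hu] at e
  have hbK : ⟪Φ k, Kinv (Φ k)⟫ = ⟪k, k⟫ - α * ⟪k, u⟫ := by linarith
  have hc : ⟪y, Minv y⟫ = ‖y‖ ^ 2 - ⟪adjoint Φ y, μ⟫ := by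
    rw [h3, real_inner_smul_right, hμ, h1, adjoint_inner_left]
    have h4 : Φ (adjoint Φ (Kinv y)) = y - α • Kinv y := eq_sub_of_add_eq (hKapp y)
    rw [h4, inner_sub_right, real_inner_smul_right, real_inner_self_eq_norm_sq]
    ring
  have ha : ⟪k, fs⟫ = ⟪k, μ⟫ + (1 / (2 * η₁)) * ⟪k, u⟫ := by
    rw [hfs, inner_add_right, real_inner_smul_right]
  have e0 : ⟪adjoint Φ y, Vinv k⟫ = ⟪k, Vinv (adjoint Φ y)⟫ := by
    rw [← hVsymm]; exact real_inner_comm _ _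
  have hyfs : ⟪adjoint Φ y, fs⟫ = ⟪adjoint Φ y, μ⟫ + (1 / (2 * η₁)) * ⟪k, μ⟫ := by
    rw [hfs, inner_add_right, real_inner_smul_right, hu, hμ, e0]
  have hAfs : ⟪fs, A fs⟫ = ⟪adjoint Φ y, fs⟫ + (1 / (2 * η₁)) * ⟪k, fs⟫ := by
    rw [hstar, inner_add_right, real_inner_smul_right,
      real_inner_comm fs (adjoint Φ y), real_inner_comm fs k]
  have hquad : ‖Φ fs - y‖ ^ 2 + α * ‖fs‖ ^ 2
      = ⟪fs, A fs⟫ - 2 * ⟪adjoint Φ y, fs⟫ + ‖y‖ ^ 2 := by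
    rw [norm_sub_sq_real, hAapp, inner_add_right, real_inner_smul_right,
      adjoint_inner_right, real_inner_self_eq_norm_sq, real_inner_self_eq_norm_sq,
      adjoint_inner_left, real_inner_comm (Φ fs) y]
    ring
  have hββ : (1 / (2 * η₁)) * (1 / (2 * η₁)) = 1 / (4 * η₁ ^ 2) := by
    field_simp; ring
  have hPeq : ‖Φ fs - y‖ ^ 2 = ‖y‖ ^ 2 - ⟪adjoint Φ y, μ⟫
      + (1 / (4 * η₁ ^ 2)) * ⟪k, u⟫ - α * ‖fs‖ ^ 2 := by
    have e := hquad
    rw [hAfs, hyfs, ha] at e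
    linear_combination e + ⟪k, u⟫ * hββ
  rw [ha, hPeq, hbK, hc, hη₂eq]
  field_simp
  ring
end
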